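/- For every graph G, the graph Ḡ ⅋ G is provable in GS. -/

import Mathlib

namespace GSP

/-- Atoms: a propositional variable (coded by a natural number) with a polarity. -/
abbrev Atom := ℕ × Bool

/-- The dual atom. -/
def dualAtom (a : Atom) : Atom := (a.1, !a.2)

/-- A finite, simple, undirected graph whose vertices are labelled by atoms. -/
structure LGraph where
  V : Type
  [fintype : Fintype V]
  adj : V → V → Prop
  symm : ∀ {v w : V}, adj v w → adj w v
  irrefl : ∀ v : V, ¬ adj v v
  label : V → Atom

attribute [instance] LGraph.fintype

namespace LGraph

/-- An isomorphism of labelled graphs: a vertex bijection preserving labels and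
preserving and reflecting edges. -/
structure Iso (G H : LGraph) where
  toEquiv : G.V ≃ H.V
  adj_iff : ∀ v w : G.V, G.adj v w ↔ H.adj (toEquiv v) (toEquiv w)
  label_eq : ∀ v : G.V, H.label (toEquiv v) = G.label v

/-- `G ≅ H` : the graphs `G` and `H` are isomorphic. -/
def iso (G H : LGraph) : Prop := Nonempty (Iso G H)

/-- The empty graph. -/
def empty : LGraph where
  V := Empty
  adj _ _ := False
  symm h := h.elim
  irrefl v := v.elim
  label v := v.elim

/-- The single-vertex graph labelled by the atom `a`. -/
def single (a : Atom) : LGraph where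
  V := Unit
  adj _ _ := False
  symm h := h.elim
  irrefl _ h := h
  label _ := a

def parAdj (G H : LGraph) : G.V ⊕ H.V → G.V ⊕ H.V → Prop
  | .inl a, .inl b => G.adj a b
  | .inr a, .inr b => H.adj a b
  | _, _ => False

/-- The par `G ⅋ H` : disjoint union of `G` and `H`. -/
def par (G H : LGraph) : LGraph where
  V := G.V ⊕ H.V
  adj := parAdj G H
  symm := by
    rintro (a | a) (b | b) h
    · exact G.symm h
    · exact h.elim
    · exact h.elim
    · exact H.symm h
  irrefl := by
    rintro (a | a) h
    · exact G.irrefl a h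
    · exact H.irrefl a h
  label := Sum.elim G.label H.label

def tensorAdj (G H : LGraph) : G.V ⊕ H.V → G.V ⊕ H.V → Prop
  | .inl a, .inl b => G.adj a b
  | .inr a, .inr b => H.adj a b
  | .inl _, .inr _ => True
  | .inr _, .inl _ => True

/-- The tensor `G ⊗ H` : join of `G` and `H` (disjoint union plus all edges in between). -/
def tensor (G H : LGraph) : LGraph where
  V := G.V ⊕ H.V
  adj := tensorAdj G H
  symm := by
    rintro (a | a) (b | b) h
    · exact G.symm h
    · exact trivial
    · exact trivial
    · exact H.symm h
  irrefl := by
    rintro (a | a) h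
    · exact G.irrefl a h
    · exact H.irrefl a h
  label := Sum.elim G.label H.label

/-- The dual graph `Ḡ` : same vertices, complemented edges, dualized labels. -/
def dual (G : LGraph) : LGraph where
  V := G.V
  adj v w := v ≠ w ∧ ¬ G.adj v w
  symm h := ⟨fun e => h.1 e.symm, fun h' => h.2 (G.symm h')⟩
  irrefl _ h := h.1 rfl
  label v := dualAtom (G.label v)

def plugAdj (C : LGraph) (R : Set C.V) (X : LGraph) : C.V ⊕ X.V → C.V ⊕ X.V → Prop
  | .inl a, .inl b => C.adj a b
  | .inr a, .inr b => X.adj a b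
  | .inl a, .inr _ => a ∈ R
  | .inr _, .inl b => b ∈ R

/-- `C[X]_R` : the graph obtained from the context `C[·]_R` by inserting the graph `X`
as a module whose vertices are adjacent exactly to the vertices in `R`. -/
def plug (C : LGraph) (R : Set C.V) (X : LGraph) : LGraph where
  V := C.V ⊕ X.V
  adj := plugAdj C R X
  symm := by
    rintro (a | a) (b | b) h
    · exact C.symm h
    · exact h
    · exact h
    · exact X.symm h
  irrefl := by
    rintro (a | a) h
    · exact C.irrefl a h
    · exact X.irrefl a h
  label := Sum.elim C.label X.label

def compAdj (G : LGraph) (H : G.V → LGraph) :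
    (Σ v : G.V, (H v).V) → (Σ v : G.V, (H v).V) → Prop := fun x y =>
  (∃ (v : G.V) (a b : (H v).V), x = ⟨v, a⟩ ∧ y = ⟨v, b⟩ ∧ (H v).adj a b) ∨
    (x.1 ≠ y.1 ∧ G.adj x.1 y.1)

/-- The composition `G⟨H v₁, …, H vₙ⟩` of the family `H` via the graph `G`:
replace each vertex `v` of `G` by the graph `H v`. -/
def comp (G : LGraph) (H : G.V → LGraph) : LGraph where
  V := Σ v : G.V, (H v).V
  adj := compAdj G H
  symm := by
    rintro x y (⟨v, a, b, hx, hy, hab⟩ | ⟨hne, hadj⟩)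
    · exact Or.inl ⟨v, b, a, hy, hx, (H v).symm hab⟩
    · exact Or.inr ⟨hne.symm, G.symm hadj⟩
  irrefl := by
    rintro ⟨v, a⟩ (⟨w, x, y, hx, hy, hxy⟩ | ⟨hne, _⟩)
    · have h := hx.symm.trans hy
      obtain rfl : x = y := by simpa using h
      exact (H w).irrefl x hxy
    · exact hne rfl
  label x := (H x.1).label x.2

/-- A module of `G` : a set `M` of vertices such that every vertex outside `M`
is adjacent either to all vertices of `M` or to none of them. -/
def IsModule (G : LGraph) (M : Set G.V) : Prop :=
  ∀ v ∉ M, ∀ x ∈ M, ∀ y ∈ M, (G.adj v x ↔ G.adj v y)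

/-- A prime graph: at least 2 vertices and only trivial modules. -/
def Prime (G : LGraph) : Prop :=
  2 ≤ Fintype.card G.V ∧
    ∀ M : Set G.V, G.IsModule M → M = ∅ ∨ (∃ v, M = {v}) ∨ M = Set.univ

/-- `G` is `P₄`-free: no four distinct vertices induce a path on 4 vertices. -/
def P4Free (G : LGraph) : Prop :=
  ¬ ∃ v₁ v₂ v₃ v₄ : G.V,
      v₁ ≠ v₂ ∧ v₁ ≠ v₃ ∧ v₁ ≠ v₄ ∧ v₂ ≠ v₃ ∧ v₂ ≠ v₄ ∧ v₃ ≠ v₄ ∧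
      G.adj v₁ v₂ ∧ G.adj v₂ v₃ ∧ G.adj v₃ v₄ ∧
      ¬ G.adj v₁ v₃ ∧ ¬ G.adj v₁ v₄ ∧ ¬ G.adj v₂ v₄

end LGraph

open LGraph

/-- The `n`-fold tensor `X₁ ⊗ ⋯ ⊗ Xₙ`. -/
def bigTensor : (n : ℕ) → (Fin n → LGraph) → LGraph
  | 0, _ => LGraph.empty
  | n + 1, F => (F 0).tensor (bigTensor n fun i => F i.succ)

/-- The `n`-fold par `X₁ ⅋ ⋯ ⅋ Xₙ`. -/
def bigPar : (n : ℕ) → (Fin n → LGraph) → LGraph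
  | 0, _ => LGraph.empty
  | n + 1, F => (F 0).par (bigPar n fun i => F i.succ)

/-- The inference rules of system GS (premise, conclusion). -/
inductive GSRule : LGraph → LGraph → Prop
  /-- ai↓ : premise `∅`, conclusion `ā ⅋ a`. -/
  | ai (a : Atom) : GSRule LGraph.empty ((single (dualAtom a)).par (single a))
  /-- ss↓ : premise `B[A]_S`, conclusion `B ⅋ A`, for `A ≠ ∅` and `S ≠ ∅`. -/
  | ss (A B : LGraph) (S : Set B.V) :
      Nonempty A.V → S ≠ ∅ → GSRule (B.plug S A) (B.par A)
  /-- p↓ : premise `(M₁ ⅋ N₁) ⊗ ⋯ ⊗ (Mₙ ⅋ Nₙ)`, conclusion `P̄⟨M₁,…,Mₙ⟩ ⅋ P⟨N₁,…,Nₙ⟩`,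
  for `P` prime with `n = |V(P)| ≥ 4` and all `Mᵢ ≠ ∅`. -/
  | p (n : ℕ) (P : LGraph) (e : P.V ≃ Fin n) (M N : Fin n → LGraph) :
      P.Prime → 4 ≤ n → (∀ i, Nonempty (M i).V) →
      GSRule (bigTensor n fun i => (M i).par (N i))
        ((P.dual.comp fun v => M (e v)).par (P.comp fun v => N (e v)))

/-- The "up" rules ai↑, ss↑, p↑ (premise, conclusion). -/
inductive UpRule : LGraph → LGraph → Prop
  /-- ai↑ : premise `a ⊗ ā`, conclusion `∅`. -/
  | ai (a : Atom) : UpRule ((single a).tensor (single (dualAtom a))) LGraph.empty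
  /-- ss↑ : premise `B ⊗ A`, conclusion `B[A]_S`, for `A ≠ ∅` and `S ≠ V(B)`. -/
  | ss (A B : LGraph) (S : Set B.V) :
      Nonempty A.V → S ≠ Set.univ → UpRule (B.tensor A) (B.plug S A)
  /-- p↑ : premise `P⟨M₁,…,Mₙ⟩ ⊗ P̄⟨N₁,…,Nₙ⟩`, conclusion `(M₁ ⊗ N₁) ⅋ ⋯ ⅋ (Mₙ ⊗ Nₙ)`,
  for `P` prime with `n = |V(P)| ≥ 4` and all `Mᵢ ≠ ∅`. -/
  | p (n : ℕ) (P : LGraph) (e : P.V ≃ Fin n) (M N : Fin n → LGraph) :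
      P.Prime → 4 ≤ n → (∀ i, Nonempty (M i).V) →
      UpRule ((P.comp fun v => M (e v)).tensor (P.dual.comp fun v => N (e v)))
        (bigPar n fun i => (M i).tensor (N i))

/-- The rules of system SGS : the rules of GS together with their duals. -/
def SGSRule (G H : LGraph) : Prop := GSRule G H ∨ UpRule G H

/-- A single inference step in a system: inside some context, replace a module
isomorphic to the premise of a rule by the corresponding conclusion. -/
def Step (Rules : LGraph → LGraph → Prop) (G H : LGraph) : Prop :=
  ∃ (C : LGraph) (R : Set C.V) (p c : LGraph),
    Rules p c ∧ G.iso (C.plug R p) ∧ H.iso (C.plug R c)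

/-- A derivation in a system from `G` to `H` : a finite sequence of inference steps
and isomorphisms leading from `G` to `H`. -/
def Deriv (Rules : LGraph → LGraph → Prop) (G H : LGraph) : Prop :=
  Relation.ReflTransGen (fun X Y => X.iso Y ∨ Step Rules X Y) G H

/-- A graph is provable in a system if there is a derivation from `∅` to it. -/
def Provable (Rules : LGraph → LGraph → Prop) (G : LGraph) : Prop :=
  Deriv Rules LGraph.empty G

/-- Formulas: unit, positive and negative atoms, par and tensor. -/
inductive Formula where
  | unit : Formula
  | pos (a : ℕ) : Formula
  | neg (a : ℕ) : Formula
  | par (φ ψ : Formula) : Formula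
  | tens (φ ψ : Formula) : Formula

/-- The graph `[φ]` of a formula `φ`. -/
def Formula.graph : Formula → LGraph
  | .unit => LGraph.empty
  | .pos a => single (a, true)
  | .neg a => single (a, false)
  | .par φ ψ => φ.graph.par ψ.graph
  | .tens φ ψ => φ.graph.tensor ψ.graph

/-- Structural equivalence of formulas: the smallest congruence making `⅋` and `⊗`
associative and commutative with unit `∘`. -/
inductive Formula.equiv : Formula → Formula → Prop
  | refl (φ) : Formula.equiv φ φ
  | symm {φ ψ} : Formula.equiv φ ψ → Formula.equiv ψ φ
  | trans {φ ψ χ} : Formula.equiv φ ψ → Formula.equiv ψ χ → Formula.equiv φ χ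
  | parComm (φ ψ) : Formula.equiv (.par φ ψ) (.par ψ φ)
  | parAssoc (φ ψ χ) : Formula.equiv (.par φ (.par ψ χ)) (.par (.par φ ψ) χ)
  | parUnit (φ) : Formula.equiv (.par φ .unit) φ
  | tensComm (φ ψ) : Formula.equiv (.tens φ ψ) (.tens ψ φ)
  | tensAssoc (φ ψ χ) : Formula.equiv (.tens φ (.tens ψ χ)) (.tens (.tens φ ψ) χ)
  | tensUnit (φ) : Formula.equiv (.tens φ .unit) φ
  | parCongr {φ φ' ψ ψ'} : Formula.equiv φ φ' → Formula.equiv ψ ψ' →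
      Formula.equiv (.par φ ψ) (.par φ' ψ')
  | tensCongr {φ φ' ψ ψ'} : Formula.equiv φ φ' → Formula.equiv ψ ψ' →
      Formula.equiv (.tens φ ψ) (.tens φ' ψ')

/-- A formula is unit-free if it contains no occurrence of the unit `∘`. -/
def Formula.UnitFree : Formula → Prop
  | .unit => False
  | .pos _ => True
  | .neg _ => True
  | .par φ ψ => φ.UnitFree ∧ ψ.UnitFree
  | .tens φ ψ => φ.UnitFree ∧ ψ.UnitFree

/-- The sequent calculus MLL° (multiplicative linear logic with mix) on multisets
of formulas. -/
inductive MLL : Multiset Formula → Prop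
  | ax (a : ℕ) : MLL {Formula.pos a, Formula.neg a}
  | tens {Γ Δ : Multiset Formula} (φ ψ : Formula) :
      MLL (φ ::ₘ Γ) → MLL (ψ ::ₘ Δ) → MLL (Formula.tens φ ψ ::ₘ (Γ + Δ))
  | par {Γ : Multiset Formula} (φ ψ : Formula) :
      MLL (φ ::ₘ ψ ::ₘ Γ) → MLL (Formula.par φ ψ ::ₘ Γ)
  | mix {Γ Δ : Multiset Formula} : MLL Γ → MLL Δ → MLL (Γ + Δ)

/-! ### Auxiliary development for `identity_provable` -/

section Aux

open LGraph Set

namespace LGraph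

/-! #### Basic simp lemmas for the graph operations -/

@[simp] theorem par_adj_ll {G H : LGraph} {a b : G.V} :
    (G.par H).adj (.inl a) (.inl b) ↔ G.adj a b := Iff.rfl
@[simp] theorem par_adj_lr {G H : LGraph} {a : G.V} {b : H.V} :
    (G.par H).adj (.inl a) (.inr b) ↔ False := Iff.rfl
@[simp] theorem par_adj_rl {G H : LGraph} {a : H.V} {b : G.V} :
    (G.par H).adj (.inr a) (.inl b) ↔ False := Iff.rfl
@[simp] theorem par_adj_rr {G H : LGraph} {a b : H.V} :
    (G.par H).adj (.inr a) (.inr b) ↔ H.adj a b := Iff.rfl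
@[simp] theorem par_label_l {G H : LGraph} {a : G.V} :
    (G.par H).label (.inl a) = G.label a := rfl
@[simp] theorem par_label_r {G H : LGraph} {a : H.V} :
    (G.par H).label (.inr a) = H.label a := rfl

@[simp] theorem tensor_adj_ll {G H : LGraph} {a b : G.V} :
    (G.tensor H).adj (.inl a) (.inl b) ↔ G.adj a b := Iff.rfl
@[simp] theorem tensor_adj_lr {G H : LGraph} {a : G.V} {b : H.V} :
    (G.tensor H).adj (.inl a) (.inr b) ↔ True := Iff.rfl
@[simp] theorem tensor_adj_rl {G H : LGraph} {a : H.V} {b : G.V} :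
    (G.tensor H).adj (.inr a) (.inl b) ↔ True := Iff.rfl
@[simp] theorem tensor_adj_rr {G H : LGraph} {a b : H.V} :
    (G.tensor H).adj (.inr a) (.inr b) ↔ H.adj a b := Iff.rfl
@[simp] theorem tensor_label_l {G H : LGraph} {a : G.V} :
    (G.tensor H).label (.inl a) = G.label a := rfl
@[simp] theorem tensor_label_r {G H : LGraph} {a : H.V} :
    (G.tensor H).label (.inr a) = H.label a := rfl

@[simp] theorem plug_adj_ll {C X : LGraph} {R : Set C.V} {a b : C.V} :
    (C.plug R X).adj (.inl a) (.inl b) ↔ C.adj a b := Iff.rfl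
@[simp] theorem plug_adj_lr {C X : LGraph} {R : Set C.V} {a : C.V} {b : X.V} :
    (C.plug R X).adj (.inl a) (.inr b) ↔ a ∈ R := Iff.rfl
@[simp] theorem plug_adj_rl {C X : LGraph} {R : Set C.V} {a : X.V} {b : C.V} :
    (C.plug R X).adj (.inr a) (.inl b) ↔ b ∈ R := Iff.rfl
@[simp] theorem plug_adj_rr {C X : LGraph} {R : Set C.V} {a b : X.V} :
    (C.plug R X).adj (.inr a) (.inr b) ↔ X.adj a b := Iff.rfl
@[simp] theorem plug_label_l {C X : LGraph} {R : Set C.V} {a : C.V} :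
    (C.plug R X).label (.inl a) = C.label a := rfl
@[simp] theorem plug_label_r {C X : LGraph} {R : Set C.V} {a : X.V} :
    (C.plug R X).label (.inr a) = X.label a := rfl

@[simp] theorem dual_adj {G : LGraph} {a b : G.V} :
    G.dual.adj a b ↔ a ≠ b ∧ ¬ G.adj a b := Iff.rfl
@[simp] theorem dual_label {G : LGraph} {a : G.V} :
    G.dual.label a = dualAtom (G.label a) := rfl

theorem adj_comm (G : LGraph) (a b : G.V) : G.adj a b ↔ G.adj b a :=
  ⟨G.symm, G.symm⟩

/-! #### Isomorphisms -/

def Iso.refl (G : LGraph) : Iso G G :=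
  ⟨Equiv.refl _, fun _ _ => Iff.rfl, fun _ => rfl⟩

def Iso.symm {G H : LGraph} (f : Iso G H) : Iso H G where
  toEquiv := f.toEquiv.symm
  adj_iff v w := by rw [f.adj_iff]; simp
  label_eq v := by have := f.label_eq (f.toEquiv.symm v); simpa using this.symm

def Iso.trans {G H K : LGraph} (f : Iso G H) (g : Iso H K) : Iso G K where
  toEquiv := f.toEquiv.trans g.toEquiv
  adj_iff v w := by rw [f.adj_iff, g.adj_iff]; rfl
  label_eq v := by rw [Equiv.trans_apply, g.label_eq, f.label_eq]

theorem iso_rfl (G : LGraph) : G.iso G := ⟨Iso.refl G⟩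

theorem iso_symm {G H : LGraph} (h : G.iso H) : H.iso G := h.elim fun f => ⟨f.symm⟩

theorem iso_trans {G H K : LGraph} (h : G.iso H) (h' : H.iso K) : G.iso K :=
  h.elim fun f => h'.elim fun g => ⟨f.trans g⟩

end LGraph

end Aux
section Aux2
open Set
namespace LGraph

theorem par_congr {A A' B B' : LGraph} (hA : A.iso A') (hB : B.iso B') :
    (A.par B).iso (A'.par B') := by
  obtain ⟨f⟩ := hA; obtain ⟨g⟩ := hB
  refine ⟨⟨{ toFun := fun z => match z with
              | .inl a => .inl (f.toEquiv a) | .inr b => .inr (g.toEquiv b)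
             invFun := fun z => match z with
              | .inl a => .inl (f.toEquiv.symm a) | .inr b => .inr (g.toEquiv.symm b)
             left_inv := by rintro (a | b) <;> simp <;> rfl
             right_inv := by rintro (a | b) <;> simp <;> rfl }, ?_, ?_⟩⟩
  · rintro (v | v) (w | w)
    · exact f.adj_iff v w
    · exact Iff.rfl
    · exact Iff.rfl
    · exact g.adj_iff v w
  · rintro (v | v)
    · exact f.label_eq v
    · exact g.label_eq v

theorem tensor_congr {A A' B B' : LGraph} (hA : A.iso A') (hB : B.iso B') :
    (A.tensor B).iso (A'.tensor B') := by
  obtain ⟨f⟩ := hA; obtain ⟨g⟩ := hB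
  refine ⟨⟨{ toFun := fun z => match z with
              | .inl a => .inl (f.toEquiv a) | .inr b => .inr (g.toEquiv b)
             invFun := fun z => match z with
              | .inl a => .inl (f.toEquiv.symm a) | .inr b => .inr (g.toEquiv.symm b)
             left_inv := by rintro (a | b) <;> simp <;> rfl
             right_inv := by rintro (a | b) <;> simp <;> rfl }, ?_, ?_⟩⟩
  · rintro (v | v) (w | w)
    · exact f.adj_iff v w
    · exact Iff.rfl
    · exact Iff.rfl
    · exact g.adj_iff v w
  · rintro (v | v)
    · exact f.label_eq v
    · exact g.label_eq v

theorem dual_congr {A B : LGraph} (h : A.iso B) : A.dual.iso B.dual := by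
  obtain ⟨f⟩ := h
  refine ⟨⟨f.toEquiv, fun v w => ?_, fun v => ?_⟩⟩
  · exact Iff.intro
      (fun h => ⟨fun e => h.1 (f.toEquiv.injective e), fun hb => h.2 ((f.adj_iff v w).mpr hb)⟩)
      (fun h => ⟨fun e => h.1 (congrArg f.toEquiv e), fun ha => h.2 ((f.adj_iff v w).mp ha)⟩)
  · exact congrArg dualAtom (f.label_eq v)

theorem plug_congr {C : LGraph} (R : Set C.V) {X Y : LGraph} (h : X.iso Y) :
    (C.plug R X).iso (C.plug R Y) := by
  obtain ⟨f⟩ := h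
  refine ⟨⟨{ toFun := fun z => match z with
              | .inl a => .inl a | .inr b => .inr (f.toEquiv b)
             invFun := fun z => match z with
              | .inl a => .inl a | .inr b => .inr (f.toEquiv.symm b)
             left_inv := by rintro (a | b) <;> simp <;> rfl
             right_inv := by rintro (a | b) <;> simp <;> rfl }, ?_, ?_⟩⟩
  · rintro (v | v) (w | w)
    · exact Iff.rfl
    · exact Iff.rfl
    · exact Iff.rfl
    · exact f.adj_iff v w
  · rintro (v | v)
    · rfl
    · exact f.label_eq v

theorem par_comm (A B : LGraph) : (A.par B).iso (B.par A) := by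
  refine ⟨⟨{ toFun := fun z => match z with
              | .inl a => .inr a | .inr b => .inl b
             invFun := fun z => match z with
              | .inl b => .inr b | .inr a => .inl a
             left_inv := by rintro (a | b) <;> rfl
             right_inv := by rintro (a | b) <;> rfl }, ?_, ?_⟩⟩
  · rintro (v | v) (w | w) <;> exact Iff.rfl
  · rintro (v | v) <;> rfl

theorem par_assoc (A B C : LGraph) : ((A.par B).par C).iso (A.par (B.par C)) := by
  refine ⟨⟨{ toFun := fun z => match z with
              | .inl (.inl a) => .inl a | .inl (.inr b) => .inr (.inl b) | .inr c => .inr (.inr c)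
             invFun := fun z => match z with
              | .inl a => .inl (.inl a) | .inr (.inl b) => .inl (.inr b) | .inr (.inr c) => .inr c
             left_inv := by rintro ((a | b) | c) <;> rfl
             right_inv := by rintro (a | (b | c)) <;> rfl }, ?_, ?_⟩⟩
  · rintro ((v | v) | v) ((w | w) | w) <;> exact Iff.rfl
  · rintro ((v | v) | v) <;> rfl

theorem plug_empty (C : LGraph) (R : Set C.V) : (C.plug R LGraph.empty).iso C := by
  refine ⟨⟨{ toFun := fun z => match z with
              | .inl a => a | .inr b => b.elim
             invFun := fun a => .inl a
             left_inv := by rintro (a | b); exacts [rfl, b.elim]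
             right_inv := fun a => rfl }, ?_, ?_⟩⟩
  · rintro (v | v) (w | w)
    · exact Iff.rfl
    · exact w.elim
    · exact v.elim
    · exact v.elim
  · rintro (v | v)
    · rfl
    · exact v.elim

theorem empty_plug (R : Set LGraph.empty.V) (X : LGraph) :
    (LGraph.empty.plug R X).iso X := by
  refine ⟨⟨{ toFun := fun z => match z with
              | .inl a => a.elim | .inr b => b
             invFun := fun b => .inr b
             left_inv := by rintro (a | b); exacts [a.elim, rfl]
             right_inv := fun a => rfl }, ?_, ?_⟩⟩
  · rintro (v | v) (w | w)
    · exact v.elim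
    · exact v.elim
    · exact w.elim
    · exact Iff.rfl
  · rintro (v | v)
    · exact v.elim
    · rfl

theorem plug_emptyset (C X : LGraph) : (C.plug (∅ : Set C.V) X).iso (C.par X) := by
  refine ⟨⟨Equiv.refl _, ?_, ?_⟩⟩
  · rintro (v | v) (w | w) <;> exact Iff.rfl
  · rintro (v | v) <;> rfl

theorem plug_univ (C X : LGraph) : (C.plug (Set.univ : Set C.V) X).iso (C.tensor X) := by
  refine ⟨⟨Equiv.refl _, ?_, ?_⟩⟩
  · rintro (v | v) (w | w) <;> exact Iff.rfl
  · rintro (v | v) <;> rfl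

theorem dual_par (A B : LGraph) : (A.par B).dual.iso (A.dual.tensor B.dual) := by
  refine ⟨⟨Equiv.refl _, ?_, ?_⟩⟩
  · rintro (v | v) (w | w)
    · show Sum.inl v ≠ Sum.inl w ∧ ¬ A.adj v w ↔ v ≠ w ∧ ¬ A.adj v w
      simp
    · show Sum.inl v ≠ Sum.inr w ∧ ¬ False ↔ True
      simp
    · show Sum.inr v ≠ Sum.inl w ∧ ¬ False ↔ True
      simp
    · show Sum.inr v ≠ Sum.inr w ∧ ¬ B.adj v w ↔ v ≠ w ∧ ¬ B.adj v w
      simp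
  · rintro (v | v) <;> rfl

theorem dual_tensor (A B : LGraph) : (A.tensor B).dual.iso (A.dual.par B.dual) := by
  refine ⟨⟨Equiv.refl _, ?_, ?_⟩⟩
  · rintro (v | v) (w | w)
    · show Sum.inl v ≠ Sum.inl w ∧ ¬ A.adj v w ↔ v ≠ w ∧ ¬ A.adj v w
      simp
    · show Sum.inl v ≠ Sum.inr w ∧ ¬ True ↔ False
      simp
    · show Sum.inr v ≠ Sum.inl w ∧ ¬ True ↔ False
      simp
    · show Sum.inr v ≠ Sum.inr w ∧ ¬ B.adj v w ↔ v ≠ w ∧ ¬ B.adj v w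
      simp
  · rintro (v | v) <;> rfl

/-- The composite of two contexts is a context. -/
theorem plug_plug (C : LGraph) (R : Set C.V) (C' : LGraph) (R' : Set C'.V) (X : LGraph) :
    (C.plug R (C'.plug R' X)).iso
      ((C.plug R C').plug {z | Sum.elim (· ∈ R) (· ∈ R') z} X) := by
  refine ⟨⟨{ toFun := fun z => match z with
              | .inl c => .inl (.inl c)
              | .inr (.inl c') => .inl (.inr c')
              | .inr (.inr x) => .inr x
             invFun := fun z => match z with
              | .inl (.inl c) => .inl c
              | .inl (.inr c') => .inr (.inl c')
              | .inr x => .inr (.inr x)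
             left_inv := by rintro (c | (c' | x)) <;> rfl
             right_inv := by rintro ((c | c') | x) <;> rfl }, ?_, ?_⟩⟩
  · rintro (v | (v | v)) (w | (w | w)) <;> exact Iff.rfl
  · rintro (v | (v | v)) <;> rfl

theorem plug_par_left (A B X : LGraph) (R : Set A.V) :
    ((A.par B).plug {z | Sum.elim (· ∈ R) (fun _ => False) z} X).iso ((A.plug R X).par B) := by
  refine ⟨⟨{ toFun := fun z => match z with
              | .inl (.inl a) => .inl (.inl a)
              | .inl (.inr b) => .inr b
              | .inr x => .inl (.inr x)
             invFun := fun z => match z with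
              | .inl (.inl a) => .inl (.inl a)
              | .inl (.inr x) => .inr x
              | .inr b => .inl (.inr b)
             left_inv := by rintro ((a | b) | x) <;> rfl
             right_inv := by rintro ((a | x) | b) <;> rfl }, ?_, ?_⟩⟩
  · rintro ((a | b) | x) ((a' | b') | x') <;> exact Iff.rfl
  · rintro ((a | b) | x) <;> rfl

theorem plug_par_right (A B X : LGraph) (R : Set B.V) :
    ((A.par B).plug {z | Sum.elim (fun _ => False) (· ∈ R) z} X).iso (A.par (B.plug R X)) := by
  refine ⟨⟨{ toFun := fun z => match z with
              | .inl (.inl a) => .inl a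
              | .inl (.inr b) => .inr (.inl b)
              | .inr x => .inr (.inr x)
             invFun := fun z => match z with
              | .inl a => .inl (.inl a)
              | .inr (.inl b) => .inl (.inr b)
              | .inr (.inr x) => .inr x
             left_inv := by rintro ((a | b) | x) <;> rfl
             right_inv := by rintro (a | (b | x)) <;> rfl }, ?_, ?_⟩⟩
  · rintro ((a | b) | x) ((a' | b') | x') <;> exact Iff.rfl
  · rintro ((a | b) | x) <;> rfl

theorem plug_tensor_left (A B X : LGraph) :
    ((A.tensor B).plug {z | Sum.elim (fun _ => True) (fun _ => False) z} X).iso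
      (A.tensor (B.par X)) := by
  refine ⟨⟨{ toFun := fun z => match z with
              | .inl (.inl a) => .inl a
              | .inl (.inr b) => .inr (.inl b)
              | .inr x => .inr (.inr x)
             invFun := fun z => match z with
              | .inl a => .inl (.inl a)
              | .inr (.inl b) => .inl (.inr b)
              | .inr (.inr x) => .inr x
             left_inv := by rintro ((a | b) | x) <;> rfl
             right_inv := by rintro (a | (b | x)) <;> rfl }, ?_, ?_⟩⟩
  · rintro ((a | b) | x) ((a' | b') | x') <;> exact Iff.rfl
  · rintro ((a | b) | x) <;> rfl

end LGraph
end Aux2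
section Aux3
open LGraph Set

variable {Rules : LGraph → LGraph → Prop}

theorem deriv_iso {G H : LGraph} (h : G.iso H) : Deriv Rules G H :=
  Relation.ReflTransGen.single (Or.inl h)

theorem deriv_trans {G H K : LGraph} (h : Deriv Rules G H) (h' : Deriv Rules H K) :
    Deriv Rules G K := Relation.ReflTransGen.trans h h'

/-- Derivations can be carried out inside an arbitrary context. -/
theorem deriv_plug (C : LGraph) (S : Set C.V) {G H : LGraph} (h : Deriv Rules G H) :
    Deriv Rules (C.plug S G) (C.plug S H) := by
  induction h with
  | refl => exact Relation.ReflTransGen.refl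
  | tail _ hstep ih =>
    refine ih.tail ?_
    rcases hstep with hiso | ⟨C', R', p, c, hpc, h1, h2⟩
    · exact Or.inl (plug_congr _ hiso)
    · refine Or.inr ⟨C.plug S C', {z | Sum.elim (· ∈ S) (· ∈ R') z}, p, c, hpc, ?_, ?_⟩
      · exact iso_trans (plug_congr _ h1) (plug_plug C S C' R' p)
      · exact iso_trans (plug_congr _ h2) (plug_plug C S C' R' c)

/-- A rule applied inside a context gives a derivation. -/
theorem deriv_rule_plug (C : LGraph) (S : Set C.V) {p c : LGraph} (h : Rules p c) :
    Deriv Rules (C.plug S p) (C.plug S c) :=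
  Relation.ReflTransGen.single (Or.inr ⟨C, S, p, c, h, iso_rfl _, iso_rfl _⟩)

theorem deriv_rule {p c : LGraph} (h : Rules p c) : Deriv Rules p c := by
  refine Relation.ReflTransGen.single (Or.inr ⟨LGraph.empty, ∅, p, c, h, ?_, ?_⟩)
  · exact iso_symm (empty_plug ∅ p)
  · exact iso_symm (empty_plug ∅ c)

theorem provable_iso {G H : LGraph} (h : Provable Rules G) (hi : G.iso H) :
    Provable Rules H := deriv_trans h (deriv_iso hi)

theorem provable_plug {A X : LGraph} (R : Set A.V) (hA : Provable Rules A)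
    (hX : Provable Rules X) : Provable Rules (A.plug R X) :=
  deriv_trans (deriv_trans hA (deriv_iso (iso_symm (plug_empty A R)))) (deriv_plug A R hX)

theorem provable_par {A X : LGraph} (hA : Provable Rules A) (hX : Provable Rules X) :
    Provable Rules (A.par X) :=
  provable_iso (provable_plug ∅ hA hX) (plug_emptyset A X)

theorem provable_tensor {A X : LGraph} (hA : Provable Rules A) (hX : Provable Rules X) :
    Provable Rules (A.tensor X) :=
  provable_iso (provable_plug Set.univ hA hX) (plug_univ A X)

theorem provable_isEmpty (H : LGraph) (h : IsEmpty H.V) : Provable Rules H := by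
  haveI : IsEmpty LGraph.empty.V := ⟨fun v => v.elim⟩
  haveI := h
  refine deriv_iso ⟨⟨Equiv.equivOfIsEmpty (α := LGraph.empty.V) (β := H.V), ?_, ?_⟩⟩
  · intro v; exact v.elim
  · intro v; exact v.elim

theorem bigTensor_provable : ∀ (n : ℕ) (F : Fin n → LGraph),
    (∀ i, Provable Rules (F i)) → Provable Rules (bigTensor n F)
  | 0, _, _ => Relation.ReflTransGen.refl
  | n + 1, F, h =>
    provable_tensor (h 0) (bigTensor_provable n (fun i => F i.succ) (fun i => h i.succ))

end Aux3
section Aux4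
open LGraph Set

attribute [local instance] Classical.propDecidable

/-- The induced subgraph on a set of vertices. -/
noncomputable def induce (G : LGraph) (s : Set G.V) : LGraph where
  V := ↥s
  fintype := (Set.toFinite s).fintype
  adj a b := G.adj a b
  symm h := G.symm h
  irrefl a := G.irrefl a
  label a := G.label a

@[simp] theorem induce_adj {G : LGraph} {s : Set G.V} {a b : ↥s} :
    (induce G s).adj a b ↔ G.adj a b := Iff.rfl
@[simp] theorem induce_label {G : LGraph} {s : Set G.V} {a : ↥s} :
    (induce G s).label a = G.label a := rfl

noncomputable def splitEquiv {G : LGraph} (K : Set G.V) :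
    G.V ≃ ((induce G K).V ⊕ (induce G Kᶜ).V) where
  toFun v := if h : v ∈ K then .inl ⟨v, h⟩ else .inr ⟨v, h⟩
  invFun := Sum.elim Subtype.val Subtype.val
  left_inv v := by by_cases h : v ∈ K <;> simp [h] <;> rfl
  right_inv x := by
    rcases x with ⟨v, hv⟩ | ⟨v, hv⟩
    · exact dif_pos hv
    · rw [Set.mem_compl_iff] at hv
      exact dif_neg hv

theorem splitEquiv_apply_mem {G : LGraph} {K : Set G.V} {v : G.V} (h : v ∈ K) :
    splitEquiv K v = Sum.inl ⟨v, h⟩ := dif_pos h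

theorem splitEquiv_apply_not_mem {G : LGraph} {K : Set G.V} {v : G.V} (h : v ∉ K) :
    splitEquiv K v = Sum.inr ⟨v, h⟩ := dif_neg h

theorem split_par {G : LGraph} (K : Set G.V)
    (h : ∀ x ∈ K, ∀ y ∉ K, ¬ G.adj x y) :
    G.iso ((induce G K).par (induce G Kᶜ)) := by
  refine ⟨⟨splitEquiv K, ?_, ?_⟩⟩
  · intro v w
    show G.adj v w ↔
      parAdj (induce G K) (induce G Kᶜ) (splitEquiv K v) (splitEquiv K w)
    by_cases hv : v ∈ K <;> by_cases hw : w ∈ K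
    · rw [splitEquiv_apply_mem hv, splitEquiv_apply_mem hw]; exact Iff.rfl
    · rw [splitEquiv_apply_mem hv, splitEquiv_apply_not_mem hw]
      exact iff_false_intro (h v hv w hw)
    · rw [splitEquiv_apply_not_mem hv, splitEquiv_apply_mem hw]
      exact iff_false_intro (fun ha => h w hw v hv (G.symm ha))
    · rw [splitEquiv_apply_not_mem hv, splitEquiv_apply_not_mem hw]; exact Iff.rfl
  · intro v
    show Sum.elim (induce G K).label (induce G Kᶜ).label (splitEquiv K v) = G.label v
    by_cases hv : v ∈ K
    · rw [splitEquiv_apply_mem hv]; rfl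
    · rw [splitEquiv_apply_not_mem hv]; rfl

theorem split_tensor {G : LGraph} (K : Set G.V)
    (h : ∀ x ∈ K, ∀ y ∉ K, G.adj x y) :
    G.iso ((induce G K).tensor (induce G Kᶜ)) := by
  refine ⟨⟨splitEquiv K, ?_, ?_⟩⟩
  · intro v w
    show G.adj v w ↔
      tensorAdj (induce G K) (induce G Kᶜ) (splitEquiv K v) (splitEquiv K w)
    by_cases hv : v ∈ K <;> by_cases hw : w ∈ K
    · rw [splitEquiv_apply_mem hv, splitEquiv_apply_mem hw]; exact Iff.rfl
    · rw [splitEquiv_apply_mem hv, splitEquiv_apply_not_mem hw]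
      exact iff_true_intro (h v hv w hw)
    · rw [splitEquiv_apply_not_mem hv, splitEquiv_apply_mem hw]
      exact iff_true_intro (G.symm (h w hw v hv))
    · rw [splitEquiv_apply_not_mem hv, splitEquiv_apply_not_mem hw]; exact Iff.rfl
  · intro v
    show Sum.elim (induce G K).label (induce G Kᶜ).label (splitEquiv K v) = G.label v
    by_cases hv : v ∈ K
    · rw [splitEquiv_apply_mem hv]; rfl
    · rw [splitEquiv_apply_not_mem hv]; rfl

/-- A graph with a unique vertex is isomorphic to a single-vertex graph. -/
theorem iso_single {G : LGraph} (x : G.V) (hx : ∀ y, y = x) :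
    (single (G.label x)).iso G := by
  refine ⟨⟨{ toFun := fun _ => x
             invFun := fun _ => ()
             left_inv := fun _ => rfl
             right_inv := fun y => (hx y).symm }, ?_, ?_⟩⟩
  · intro v w
    constructor
    · intro h; exact h.elim
    · intro h; exact G.irrefl x h
  · intro v; rfl

/-! #### `comp` helper lemmas -/

theorem compAdj_same {G : LGraph} {H : G.V → LGraph} {v : G.V} {a b : (H v).V} :
    compAdj G H ⟨v, a⟩ ⟨v, b⟩ ↔ (H v).adj a b := by
  constructor
  · rintro (⟨u, x, y, hx, hy, hxy⟩ | ⟨hne, _⟩)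
    · obtain ⟨hu, hx2⟩ := Sigma.mk.inj_iff.mp hx
      subst hu
      have hax : a = x := eq_of_heq hx2
      subst hax
      have hby : b = y := eq_of_heq (Sigma.mk.inj_iff.mp hy).2
      subst hby
      exact hxy
    · exact absurd rfl hne
  · intro h; exact Or.inl ⟨v, a, b, rfl, rfl, h⟩

theorem compAdj_ne {G : LGraph} {H : G.V → LGraph} {v w : G.V} (hvw : v ≠ w)
    {a : (H v).V} {b : (H w).V} :
    compAdj G H ⟨v, a⟩ ⟨w, b⟩ ↔ G.adj v w := by
  constructor
  · rintro (⟨u, x, y, hx, hy, hxy⟩ | ⟨_, h⟩)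
    · exact absurd ((congrArg Sigma.fst hx).trans (congrArg Sigma.fst hy).symm) hvw
    · exact h
  · intro h; exact Or.inr ⟨hvw, h⟩

theorem dual_comp (P : LGraph) (H : P.V → LGraph) :
    (P.comp H).dual.iso (P.dual.comp fun v => (H v).dual) := by
  refine ⟨⟨Equiv.refl _, ?_, ?_⟩⟩
  · rintro ⟨v, a⟩ ⟨w, b⟩
    show (⟨v, a⟩ : Σ u, (H u).V) ≠ ⟨w, b⟩ ∧ ¬ compAdj P H ⟨v, a⟩ ⟨w, b⟩ ↔
      compAdj P.dual (fun u => (H u).dual) ⟨v, a⟩ ⟨w, b⟩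
    by_cases hvw : v = w
    · subst hvw
      rw [compAdj_same (G := P) (H := H)]
      refine Iff.trans ?_ (compAdj_same (G := P.dual) (H := fun u => (H u).dual)).symm
      show (⟨v, a⟩ : Σ u, (H u).V) ≠ ⟨v, b⟩ ∧ ¬ (H v).adj a b ↔ a ≠ b ∧ ¬ (H v).adj a b
      simp [Sigma.mk.inj_iff]
    · rw [compAdj_ne (G := P) (H := H) hvw]
      refine Iff.trans ?_ (compAdj_ne (G := P.dual) (H := fun u => (H u).dual) hvw).symm
      show (⟨v, a⟩ : Σ u, (H u).V) ≠ ⟨w, b⟩ ∧ ¬ P.adj v w ↔ v ≠ w ∧ ¬ P.adj v w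
      have hne : (⟨v, a⟩ : Σ u, (H u).V) ≠ ⟨w, b⟩ := by
        intro h; exact hvw (congrArg Sigma.fst h)
      simp [hne, hvw]
  · rintro ⟨v, a⟩; rfl

/-! #### module lemmas -/

theorem singleton_module (G : LGraph) (v : G.V) : G.IsModule {v} := by
  intro u _ x hx y hy
  rcases hx with rfl
  rcases hy with rfl
  exact Iff.rfl

theorem union_module {G : LGraph} {M N : Set G.V} (hM : G.IsModule M) (hN : G.IsModule N)
    (h : (M ∩ N).Nonempty) : G.IsModule (M ∪ N) := by
  obtain ⟨z, hzM, hzN⟩ := h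
  intro v hv x hx y hy
  have hvM : v ∉ M := fun hh => hv (Or.inl hh)
  have hvN : v ∉ N := fun hh => hv (Or.inr hh)
  have key : ∀ x ∈ M ∪ N, (G.adj v x ↔ G.adj v z) := by
    rintro x (hx | hx)
    · exact hM v hvM x hx z hzM
    · exact hN v hvN x hx z hzN
  rw [key x hx, key y hy]

def NoSplit (G : LGraph) : Prop :=
  ∀ K : Set G.V, K ≠ ∅ → K ≠ Set.univ → ∃ x ∈ K, ∃ y ∉ K, G.adj x y

def NoCosplit (G : LGraph) : Prop :=
  ∀ K : Set G.V, K ≠ ∅ → K ≠ Set.univ → ∃ x ∈ K, ∃ y ∉ K, ¬ G.adj x y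

theorem union_ne_univ {G : LGraph} (hs : NoSplit G) (hcs : NoCosplit G)
    {M N : Set G.V} (hM : G.IsModule M) (hN : G.IsModule N)
    (hMu : M ≠ Set.univ) (hNu : N ≠ Set.univ) (hover : (M ∩ N).Nonempty) :
    M ∪ N ≠ Set.univ := by
  intro huniv
  obtain ⟨z, hzM, hzN⟩ := hover
  -- M \ N is nonempty
  have hMN : (M \ N).Nonempty := by
    rcases Set.eq_empty_or_nonempty (M \ N) with he | h
    · exact absurd
        ((Set.union_eq_self_of_subset_left (Set.diff_eq_empty.mp he)).symm.trans huniv) hNu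
    · exact h
  have hNM : (N \ M).Nonempty := by
    rcases Set.eq_empty_or_nonempty (N \ M) with he | h
    · exact absurd
        ((Set.union_eq_self_of_subset_right (Set.diff_eq_empty.mp he)).symm.trans huniv) hMu
    · exact h
  obtain ⟨x, hxM, hxN⟩ := hMN
  obtain ⟨y, hyN, hyM⟩ := hNM
  -- uniformity of edges between M \ N and N
  have claim : ∀ a ∈ M \ N, ∀ b ∈ N, (G.adj a b ↔ G.adj x y) := by
    rintro a ⟨haM, haN⟩ b hbN
    calc G.adj a b ↔ G.adj a y := hN a haN b hbN y hyN
    _ ↔ G.adj y a := adj_comm G a y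
    _ ↔ G.adj y x := hM y hyM a haM x hxM
    _ ↔ G.adj x y := adj_comm G y x
  -- the complement of M \ N is contained in N
  have hcompl : ∀ b, b ∉ M \ N → b ∈ N := by
    intro b hb
    have : b ∈ M ∪ N := huniv ▸ Set.mem_univ b
    rcases this with hbM | hbN
    · by_cases hbN : b ∈ N
      · exact hbN
      · exact absurd ⟨hbM, hbN⟩ hb
    · exact hbN
  have hKne : (M \ N) ≠ ∅ := by
    intro he
    have hx : x ∈ M \ N := ⟨hxM, hxN⟩
    rw [he] at hx
    exact hx
  have hKnu : (M \ N) ≠ Set.univ := by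
    intro he
    have : z ∈ M \ N := he ▸ Set.mem_univ z
    exact this.2 hzN
  by_cases hε : G.adj x y
  · -- all edges between M \ N and its complement are present: contradicts NoCosplit
    obtain ⟨a, ha, b, hb, hab⟩ := hcs (M \ N) hKne hKnu
    exact hab ((claim a ha b (hcompl b hb)).mpr hε)
  · -- no edges between M \ N and its complement: contradicts NoSplit
    obtain ⟨a, ha, b, hb, hab⟩ := hs (M \ N) hKne hKnu
    exact hε ((claim a ha b (hcompl b hb)).mp hab)

/-- Every vertex of a connected, co-connected graph lies in a unique
maximal proper module. -/
theorem exists_maxmod {G : LGraph} (hs : NoSplit G) (hcs : NoCosplit G)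
    (h2 : 2 ≤ Fintype.card G.V) (v : G.V) :
    ∃ M, G.IsModule M ∧ M ≠ Set.univ ∧ v ∈ M ∧
      ∀ M', G.IsModule M' → M' ≠ Set.univ → v ∈ M' → M' ⊆ M := by
  classical
  set S : Set (Set G.V) := {M | G.IsModule M ∧ M ≠ Set.univ ∧ v ∈ M} with hS
  have hSfin : S.Finite := Set.toFinite S
  have hSne : S.Nonempty := by
    refine ⟨{v}, singleton_module G v, ?_, rfl⟩
    intro he
    obtain ⟨w, hw⟩ := Fintype.exists_ne_of_one_lt_card (by omega) v
    exact hw (by have : w ∈ ({v} : Set G.V) := he ▸ Set.mem_univ w; exact this)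
  obtain ⟨M, hMS, hMmax⟩ := Set.Finite.exists_maximalFor Set.ncard S hSfin hSne
  refine ⟨M, hMS.1, hMS.2.1, hMS.2.2, ?_⟩
  intro M' hM'mod hM'u hvM'
  have hU : (M ∪ M') ∈ S := by
    refine ⟨union_module hMS.1 hM'mod ⟨v, hMS.2.2, hvM'⟩, ?_, Or.inl hMS.2.2⟩
    exact union_ne_univ hs hcs hMS.1 hM'mod hMS.2.1 hM'u ⟨v, hMS.2.2, hvM'⟩
  have hcard : M.ncard ≤ (M ∪ M').ncard :=
    Set.ncard_le_ncard Set.subset_union_left (Set.toFinite _)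
  have heq : M.ncard = (M ∪ M').ncard := le_antisymm hcard (hMmax hU hcard)
  have : M ∪ M' = M :=
    (Set.eq_of_subset_of_ncard_le Set.subset_union_left heq.ge (Set.toFinite _)).symm
  exact fun a ha => this ▸ (Or.inr ha : a ∈ M ∪ M')

/-- No graph on 3 vertices is prime. -/
theorem not_prime_card_three {G : LGraph} (h3 : Fintype.card G.V = 3) : ¬ G.Prime := by
  rintro ⟨-, hmods⟩
  have h3' : (Finset.univ : Finset G.V).card = 3 := by
    rw [Finset.card_univ]; exact h3
  obtain ⟨x, y, z, hxy, hxz, hyz, huniv3⟩ := Finset.card_eq_three.mp h3'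
  have hcover : ∀ d : G.V, d = x ∨ d = y ∨ d = z := by
    intro d
    have hd : d ∈ (Finset.univ : Finset G.V) := Finset.mem_univ d
    rw [huniv3] at hd
    simpa using hd
  have pair_mod : ∀ a b c : G.V, a ≠ b → a ≠ c → b ≠ c → (∀ d, d = a ∨ d = b ∨ d = c) →
      (G.adj c a ↔ G.adj c b) → G.IsModule {a, b} := by
    intro a b c hab hac hbc hcov hiff
    intro u hu s hsm t htm
    have hu' : u = c := by
      rcases hcov u with rfl | rfl | rfl
      · exact absurd (Set.mem_insert u {b}) hu
      · exact absurd (Set.mem_insert_of_mem a rfl) hu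
      · rfl
    subst hu'
    rcases hsm with rfl | rfl <;> rcases htm with rfl | rfl <;>
      first | exact Iff.rfl | exact hiff | exact hiff.symm
  have pair_not_mod : ∀ a b c : G.V, a ≠ b → a ≠ c → b ≠ c → (∀ d, d = a ∨ d = b ∨ d = c) →
      ¬ (G.adj c a ↔ G.adj c b) := by
    intro a b c hab hac hbc hcov hiff
    rcases hmods {a, b} (pair_mod a b c hab hac hbc hcov hiff) with he | ⟨w, hw⟩ | he
    · exact absurd (he ▸ Set.mem_insert a {b} : a ∈ (∅ : Set G.V)) (Set.notMem_empty a)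
    · have ha : a ∈ ({w} : Set G.V) := by rw [← hw]; exact Set.mem_insert a {b}
      have hb : b ∈ ({w} : Set G.V) := by rw [← hw]; exact Set.mem_insert_of_mem a rfl
      exact hab ((Set.mem_singleton_iff.mp ha).trans (Set.mem_singleton_iff.mp hb).symm)
    · have : c ∈ ({a, b} : Set G.V) := he ▸ Set.mem_univ c
      rcases this with rfl | rfl
      · exact hac rfl
      · exact hbc rfl
  have h1 := pair_not_mod x y z hxy hxz hyz hcover
  have h2 := pair_not_mod y z x hyz (Ne.symm hxy) (Ne.symm hxz)
    (fun d => by rcases hcover d with h | h | h <;> tauto)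
  have h3' := pair_not_mod x z y hxz hxy (Ne.symm hyz)
    (fun d => by rcases hcover d with h | h | h <;> tauto)
  have c1 : G.adj z x ↔ G.adj x z := adj_comm G z x
  have c2 : G.adj z y ↔ G.adj y z := adj_comm G z y
  have c3 : G.adj x y ↔ G.adj y x := adj_comm G x y
  tauto

end Aux4
section Gallai
open LGraph Set

attribute [local instance] Classical.propDecidable

variable (G : LGraph) (Mm : G.V → Set G.V)

def qsetoid : Setoid G.V where
  r u w := Mm u = Mm w
  iseqv := ⟨fun _ => rfl, Eq.symm, Eq.trans⟩

def qmk (v : G.V) : Quotient (qsetoid G Mm) := Quotient.mk (qsetoid G Mm) v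

def MSet : Quotient (qsetoid G Mm) → Set G.V := Quotient.lift Mm (fun _ _ h => h)

@[simp] theorem MSet_mk (v : G.V) : MSet G Mm (qmk G Mm v) = Mm v := rfl

theorem qmk_eq_iff {u v : G.V} : qmk G Mm u = qmk G Mm v ↔ Mm u = Mm v :=
  ⟨fun h => Quotient.exact h, fun h => Quotient.sound h⟩

theorem qmk_surjective (q : Quotient (qsetoid G Mm)) : ∃ v, qmk G Mm v = q :=
  Quotient.exists_rep q

/-- The quotient graph by the partition into maximal proper modules. -/
noncomputable def quotG : LGraph where
  V := Quotient (qsetoid G Mm)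
  fintype := Fintype.ofFinite _
  adj x y := x ≠ y ∧ ∃ u w, qmk G Mm u = x ∧ qmk G Mm w = y ∧ G.adj u w
  symm := by
    rintro x y ⟨hne, u, w, hu, hw, h⟩
    exact ⟨hne.symm, w, u, hw, hu, G.symm h⟩
  irrefl := fun x h => h.1 rfl
  label _ := ((0 : ℕ), true)

/-- The parts: induced subgraphs on the maximal proper modules. -/
noncomputable def parts : Quotient (qsetoid G Mm) → LGraph :=
  fun q => induce G (MSet G Mm q)

/-- Underlying vertex of a vertex of the composition. -/
def pval : (Σ q : Quotient (qsetoid G Mm), (parts G Mm q).V) → G.V :=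
  fun z => Subtype.val (α := G.V) z.2

variable {G Mm}

/-- Hypotheses of the Gallai situation, bundled. -/
structure MaxModFam : Prop where
  hmem : ∀ v, v ∈ Mm v
  hmod : ∀ v, G.IsModule (Mm v)
  hproper : ∀ v, Mm v ≠ Set.univ
  hmax : ∀ v M, G.IsModule M → M ≠ Set.univ → v ∈ M → M ⊆ Mm v
  hs : NoSplit G
  hcs : NoCosplit G

namespace MaxModFam

variable (hF : @MaxModFam G Mm)
include hF

theorem mm_eq {v w : G.V} (h : w ∈ Mm v) : Mm w = Mm v := by
  have hov : (Mm v ∩ Mm w).Nonempty := ⟨w, h, hF.hmem w⟩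
  have hU : G.IsModule (Mm v ∪ Mm w) := union_module (hF.hmod v) (hF.hmod w) hov
  have hUu : Mm v ∪ Mm w ≠ Set.univ :=
    union_ne_univ hF.hs hF.hcs (hF.hmod v) (hF.hmod w) (hF.hproper v) (hF.hproper w) hov
  have h1 : Mm v ∪ Mm w ⊆ Mm v := hF.hmax v _ hU hUu (Or.inl (hF.hmem v))
  have h2 : Mm v ∪ Mm w ⊆ Mm w := hF.hmax w _ hU hUu (Or.inr (hF.hmem w))
  exact subset_antisymm (Set.subset_union_right.trans h1) (Set.subset_union_left.trans h2)

theorem qmk_eq_of_mem {v w : G.V} (h : w ∈ Mm v) : qmk G Mm w = qmk G Mm v :=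
  (qmk_eq_iff G Mm).mpr (hF.mm_eq h)

theorem not_mem_of_qmk_ne {v w : G.V} (h : qmk G Mm w ≠ qmk G Mm v) : w ∉ Mm v :=
  fun hw => h (hF.qmk_eq_of_mem hw)

theorem adj_congr {u u' v w : G.V} (h1 : Mm u = Mm v) (h2 : Mm u' = Mm w)
    (hne : Mm v ≠ Mm w) : (G.adj u u' ↔ G.adj v w) := by
  have hu'v : u' ∉ Mm v := fun hm => hne ((hF.mm_eq hm).symm.trans h2)
  have hvw : v ∉ Mm w := fun hm => hne (hF.mm_eq hm)
  have huMv : u ∈ Mm v := h1 ▸ hF.hmem u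
  have hu'Mw : u' ∈ Mm w := h2 ▸ hF.hmem u'
  calc G.adj u u' ↔ G.adj u' u := adj_comm G u u'
    _ ↔ G.adj u' v := hF.hmod v u' hu'v u huMv v (hF.hmem v)
    _ ↔ G.adj v u' := adj_comm G u' v
    _ ↔ G.adj v w := hF.hmod w v hvw u' hu'Mw w (hF.hmem w)

theorem quot_adj_iff {v w : G.V} (hne : qmk G Mm v ≠ qmk G Mm w) :
    ((quotG G Mm).adj (qmk G Mm v) (qmk G Mm w) ↔ G.adj v w) := by
  have hMne : Mm v ≠ Mm w := fun h => hne ((qmk_eq_iff G Mm).mpr h)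
  constructor
  · rintro ⟨-, u, u', hu, hu', hadj⟩
    exact (hF.adj_congr ((qmk_eq_iff G Mm).mp hu) ((qmk_eq_iff G Mm).mp hu') hMne).mp hadj
  · intro h
    exact ⟨hne, v, w, rfl, rfl, h⟩

/-- `G` is the composition of the quotient graph with the parts. -/
theorem iso_comp : G.iso ((quotG G Mm).comp (parts G Mm)) := by
  have hmemM : ∀ v : G.V, v ∈ MSet G Mm (qmk G Mm v) := fun v => hF.hmem v
  refine ⟨⟨{ toFun := fun v => ⟨qmk G Mm v, ⟨v, hmemM v⟩⟩
             invFun := pval G Mm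
             left_inv := fun v => rfl
             right_inv := ?_ }, ?_, ?_⟩⟩
  · rintro ⟨q, x, hx⟩
    obtain ⟨u, rfl⟩ := qmk_surjective G Mm q
    refine Sigma.ext (hF.qmk_eq_of_mem hx) ?_
    -- second components have propositionally equal types
    have hts : MSet G Mm (qmk G Mm x) = MSet G Mm (qmk G Mm u) := by
      simp only [MSet_mk]; exact hF.mm_eq hx
    exact (Subtype.heq_iff_coe_eq (fun a => by
      show a ∈ MSet G Mm (qmk G Mm x) ↔ a ∈ MSet G Mm (qmk G Mm u)
      rw [hts])).mpr rfl
  · intro v w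
    show G.adj v w ↔ compAdj (quotG G Mm) (parts G Mm)
      ⟨qmk G Mm v, ⟨v, hmemM v⟩⟩ ⟨qmk G Mm w, ⟨w, hmemM w⟩⟩
    by_cases hq : qmk G Mm v = qmk G Mm w
    · have hMm : Mm v = Mm w := (qmk_eq_iff G Mm).mp hq
      constructor
      · intro h
        refine Or.inl ⟨qmk G Mm v, ⟨v, hmemM v⟩, ⟨w, by rw [MSet_mk, hMm]; exact hF.hmem w⟩,
          rfl, ?_, h⟩
        refine Sigma.ext hq.symm ?_
        have hts : MSet G Mm (qmk G Mm w) = MSet G Mm (qmk G Mm v) := by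
          simp only [MSet_mk]; exact hMm.symm
        exact (Subtype.heq_iff_coe_eq (fun a => by
          show a ∈ MSet G Mm (qmk G Mm w) ↔ a ∈ MSet G Mm (qmk G Mm v)
          rw [hts])).mpr rfl
      · rintro (⟨q, a, b, ha, hb, hab⟩ | ⟨hne, -⟩)
        · have hva : v = pval G Mm ⟨q, a⟩ := congrArg (pval G Mm) ha
          have hwb : w = pval G Mm ⟨q, b⟩ := congrArg (pval G Mm) hb
          rw [hva, hwb]
          exact hab
        · exact absurd hq hne
    · refine Iff.trans ?_ (compAdj_ne (G := quotG G Mm) (H := parts G Mm) hq).symm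
      exact (hF.quot_adj_iff hq).symm
  · intro v; rfl

theorem quot_prime (h2 : 2 ≤ Fintype.card G.V) : (quotG G Mm).Prime := by
  constructor
  · -- at least two classes
    obtain ⟨v⟩ : Nonempty G.V := Fintype.card_pos_iff.mp (by omega)
    obtain ⟨w, hw⟩ : ∃ w, w ∉ Mm v := by
      by_contra h; push_neg at h
      exact hF.hproper v (Set.eq_univ_of_forall h)
    have hne : qmk G Mm w ≠ qmk G Mm v := fun he => hw (by
      have : Mm w = Mm v := (qmk_eq_iff G Mm).mp he
      exact this ▸ hF.hmem w)
    exact Fintype.one_lt_card_iff.mpr ⟨_, _, hne⟩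
  · intro Qm hQm
    by_cases hQe : Qm = ∅
    · exact Or.inl hQe
    refine Or.inr ?_
    by_cases hQs : ∃ x, Qm = {x}
    · exact Or.inl hQs
    refine Or.inr ?_
    push_neg at hQs
    obtain ⟨x, hx⟩ := Set.nonempty_iff_ne_empty.mpr hQe
    obtain ⟨y, hy, hxy⟩ : ∃ y ∈ Qm, y ≠ x := by
      by_contra h; push_neg at h
      exact hQs x (Set.eq_singleton_iff_unique_mem.mpr ⟨hx, h⟩)
    set U : Set G.V := {v | qmk G Mm v ∈ Qm} with hU
    have hUmod : G.IsModule U := by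
      intro v hv p hp q hq
      by_cases h1 : qmk G Mm p = qmk G Mm q
      · have hvp : v ∉ Mm p := fun hm => hv (by
          show qmk G Mm v ∈ Qm
          rw [hF.qmk_eq_of_mem hm]; exact hp)
        have hqMp : q ∈ Mm p := by
          have : Mm q = Mm p := (qmk_eq_iff G Mm).mp h1.symm
          exact this ▸ hF.hmem q
        exact hF.hmod p v hvp p (hF.hmem p) q hqMp
      · have hvp : qmk G Mm v ≠ qmk G Mm p := fun he => hv (by
          show qmk G Mm v ∈ Qm; rw [he]; exact hp)
        have hvq : qmk G Mm v ≠ qmk G Mm q := fun he => hv (by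
          show qmk G Mm v ∈ Qm; rw [he]; exact hq)
        calc G.adj v p ↔ (quotG G Mm).adj (qmk G Mm v) (qmk G Mm p) :=
              (hF.quot_adj_iff hvp).symm
          _ ↔ (quotG G Mm).adj (qmk G Mm v) (qmk G Mm q) := hQm _ hv _ hp _ hq
          _ ↔ G.adj v q := hF.quot_adj_iff hvq
    by_cases hUu : U = Set.univ
    · -- then Qm is everything
      apply Set.eq_univ_of_forall
      intro q
      obtain ⟨u, rfl⟩ := qmk_surjective G Mm q
      have : u ∈ U := hUu ▸ Set.mem_univ u
      exact this
    · exfalso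
      obtain ⟨a, rfl⟩ := qmk_surjective G Mm x
      have haU : a ∈ U := hx
      have hsub : U ⊆ Mm a := hF.hmax a U hUmod hUu haU
      obtain ⟨b, rfl⟩ := qmk_surjective G Mm y
      have hbU : b ∈ U := hy
      exact hxy (hF.qmk_eq_of_mem (hsub hbU))

theorem quot_card_ne_two (h2 : 2 ≤ Fintype.card G.V) :
    Fintype.card (quotG G Mm).V ≠ 2 := by
  intro hc2
  obtain ⟨v⟩ : Nonempty G.V := Fintype.card_pos_iff.mp (by omega)
  obtain ⟨w₀, hw₀⟩ : ∃ w, w ∉ Mm v := by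
    by_contra h; push_neg at h
    exact hF.hproper v (Set.eq_univ_of_forall h)
  have hout : ∀ w, w ∉ Mm v → qmk G Mm w ≠ qmk G Mm v := by
    intro w hw he
    exact hw (((qmk_eq_iff G Mm).mp he) ▸ hF.hmem w)
  have hsame : ∀ w, w ∉ Mm v → qmk G Mm w = qmk G Mm w₀ := by
    intro w hw
    by_contra hne
    have h1 := hout w hw
    have h0 := hout w₀ hw₀
    have hc : ({qmk G Mm w, qmk G Mm w₀, qmk G Mm v} : Finset (quotG G Mm).V).card ≤ 2 := by
      calc ({qmk G Mm w, qmk G Mm w₀, qmk G Mm v} : Finset (quotG G Mm).V).card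
          ≤ (Finset.univ : Finset (quotG G Mm).V).card :=
            Finset.card_le_card (Finset.subset_univ _)
        _ = 2 := by rw [Finset.card_univ]; exact hc2
    have h3 : ({qmk G Mm w, qmk G Mm w₀, qmk G Mm v} : Finset (quotG G Mm).V).card = 3 :=
      Finset.card_eq_three.mpr ⟨_, _, _, hne, h1, h0, rfl⟩
    omega
  have key : ∀ u ∈ Mm v, ∀ w, w ∉ Mm v → (G.adj u w ↔ G.adj v w₀) := by
    intro u hu w hw
    refine hF.adj_congr (hF.mm_eq hu) ((qmk_eq_iff G Mm).mp (hsame w hw)) ?_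
    intro he
    exact hw₀ (he ▸ hF.hmem w₀)
  have hMne : Mm v ≠ ∅ := by
    intro he
    have := hF.hmem v
    rw [he] at this
    exact this
  by_cases hadj : G.adj v w₀
  · obtain ⟨a, ha, b, hb, hab⟩ := hF.hcs (Mm v) hMne (hF.hproper v)
    exact hab ((key a ha b hb).mpr hadj)
  · obtain ⟨a, ha, b, hb, hab⟩ := hF.hs (Mm v) hMne (hF.hproper v)
    exact hadj ((key a ha b hb).mp hab)

theorem parts_card_lt (q : Quotient (qsetoid G Mm)) :
    Fintype.card (parts G Mm q).V < Fintype.card G.V := by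
  obtain ⟨u, rfl⟩ := qmk_surjective G Mm q
  obtain ⟨w, hw⟩ : ∃ w, w ∉ Mm u := by
    by_contra h; push_neg at h
    exact hF.hproper u (Set.eq_univ_of_forall h)
  have h1 : (Mm u).ncard < Nat.card G.V := by
    rw [← Set.ncard_univ]
    exact Set.ncard_lt_ncard (Set.ssubset_univ_iff.mpr (hF.hproper u)) (Set.toFinite _)
  have h2 : Fintype.card (parts G Mm (qmk G Mm u)).V = (Mm u).ncard := by
    rw [← Nat.card_eq_fintype_card]
    exact Nat.card_coe_set_eq (Mm u)
  rw [h2, ← Nat.card_eq_fintype_card (α := G.V)]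
  exact h1

theorem parts_nonempty (q : Quotient (qsetoid G Mm)) : Nonempty (parts G Mm q).V := by
  obtain ⟨u, rfl⟩ := qmk_surjective G Mm q
  exact ⟨⟨u, hF.hmem u⟩⟩

end MaxModFam
end Gallai
section Main
open LGraph Set

theorem induce_card_lt {G : LGraph} {K : Set G.V} (h : K ≠ Set.univ) :
    Fintype.card (induce G K).V < Fintype.card G.V := by
  have h1 : K.ncard < Nat.card G.V := by
    rw [← Set.ncard_univ]
    exact Set.ncard_lt_ncard (Set.ssubset_univ_iff.mpr h) (Set.toFinite _)
  have h2 : Fintype.card (induce G K).V = K.ncard := by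
    rw [← Nat.card_eq_fintype_card]
    exact Nat.card_coe_set_eq K
  rw [h2, ← Nat.card_eq_fintype_card (α := G.V)]
  exact h1

theorem provable_dual_par_single {G : LGraph} (x : G.V) (hx : ∀ y, y = x) :
    Provable GSRule (G.dual.par G) := by
  have h1 : Provable GSRule ((single (dualAtom (G.label x))).par (single (G.label x))) :=
    deriv_rule (GSRule.ai (G.label x))
  refine provable_iso h1 (par_congr ?_ ?_)
  · exact iso_single (G := G.dual) x hx
  · exact iso_single x hx

theorem provable_dual_par_isEmpty {G : LGraph} (h : IsEmpty G.V) :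
    Provable GSRule (G.dual.par G) :=
  provable_isEmpty _ ⟨fun z => by rcases z with z | z <;> exact h.elim z⟩

/-- Main induction for Statement 4. -/
theorem key_induction : ∀ n : ℕ, ∀ G : LGraph, Fintype.card G.V ≤ n →
    Provable GSRule (G.dual.par G) := by
  intro n
  induction n with
  | zero =>
    intro G hc
    exact provable_dual_par_isEmpty (Fintype.card_eq_zero_iff.mp (Nat.le_zero.mp hc))
  | succ n ih =>
    intro G hc
    by_cases h0 : Fintype.card G.V = 0
    · exact provable_dual_par_isEmpty (Fintype.card_eq_zero_iff.mp h0)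
    by_cases h1 : Fintype.card G.V = 1
    · obtain ⟨x, hx⟩ := Fintype.card_eq_one_iff.mp h1
      exact provable_dual_par_single x hx
    have h2 : 2 ≤ Fintype.card G.V := by omega
    by_cases hsplit : ∃ K : Set G.V, K ≠ ∅ ∧ K ≠ Set.univ ∧ ∀ x ∈ K, ∀ y ∉ K, ¬ G.adj x y
    · -- ⅋-case: G is disconnected
      obtain ⟨K, hKne, hKnu, hK⟩ := hsplit
      have hGAB : G.iso ((induce G K).par (induce G Kᶜ)) := split_par K hK
      have hKcnu : Kᶜ ≠ Set.univ := by
        intro he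
        obtain ⟨x, hx⟩ := Set.nonempty_iff_ne_empty.mpr hKne
        exact (he ▸ Set.mem_univ x : x ∈ Kᶜ) hx
      have hApr : Provable GSRule ((induce G K).dual.par (induce G K)) :=
        ih _ (by have := induce_card_lt (G := G) hKnu; omega)
      have hBpr : Provable GSRule ((induce G Kᶜ).dual.par (induce G Kᶜ)) :=
        ih _ (by have := induce_card_lt (G := G) hKcnu; omega)
      obtain ⟨xa, hxa⟩ := Set.nonempty_iff_ne_empty.mpr hKne
      obtain ⟨xb, hxb⟩ := Set.nonempty_compl.mpr hKnu
      have hBne : Nonempty (induce G Kᶜ).V := ⟨⟨xb, hxb⟩⟩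
      -- abbreviations
      set A := induce G K
      set B := induce G Kᶜ
      have h1 : Provable GSRule ((A.dual.par A).plug
          {z | Sum.elim (· ∈ (Set.univ : Set A.dual.V)) (fun _ => False) z} (B.dual.par B)) :=
        provable_plug _ hApr hBpr
      have hiso1 : ((A.dual.par A).plug
          {z | Sum.elim (· ∈ (Set.univ : Set A.dual.V)) (fun _ => False) z}
            (B.dual.par B)).iso
          (A.plug ∅ ((A.dual.tensor B.dual).plug
            {z | Sum.elim (fun _ => True) (fun _ => False) z} B)) := by
        refine iso_trans (plug_par_left A.dual A (B.dual.par B) Set.univ) ?_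
        refine iso_trans (par_congr (plug_univ A.dual (B.dual.par B)) (iso_rfl A)) ?_
        refine iso_trans (par_comm (A.dual.tensor (B.dual.par B)) A) ?_
        refine iso_trans (par_congr (iso_rfl A)
          (iso_symm (plug_tensor_left A.dual B.dual B))) ?_
        exact iso_symm (plug_emptyset A _)
      have hSne : ({z | Sum.elim (fun _ => True) (fun _ => False) z} :
          Set (A.dual.tensor B.dual).V) ≠ ∅ := by
        intro he
        have hmem : (Sum.inl ⟨xa, hxa⟩ : (A.dual.tensor B.dual).V) ∈
            ({z | Sum.elim (fun _ => True) (fun _ => False) z} :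
              Set (A.dual.tensor B.dual).V) := trivial
        rw [he] at hmem
        exact hmem
      have hstep : Deriv GSRule
          (A.plug ∅ ((A.dual.tensor B.dual).plug
            {z | Sum.elim (fun _ => True) (fun _ => False) z} B))
          (A.plug ∅ ((A.dual.tensor B.dual).par B)) :=
        deriv_rule_plug A ∅ (GSRule.ss B (A.dual.tensor B.dual) _ hBne hSne)
      have hiso2 : (A.plug ∅ ((A.dual.tensor B.dual).par B)).iso (G.dual.par G) := by
        refine iso_trans (plug_emptyset A _) ?_
        refine iso_trans (par_comm A _) ?_
        refine iso_trans (par_assoc (A.dual.tensor B.dual) B A) ?_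
        refine iso_trans (par_congr (iso_rfl (A.dual.tensor B.dual)) (par_comm B A)) ?_
        exact iso_symm (iso_trans (par_congr (dual_congr hGAB) hGAB)
          (par_congr (dual_par A B) (iso_rfl (A.par B))))
      exact deriv_trans (deriv_trans h1 (deriv_iso hiso1))
        (deriv_trans hstep (deriv_iso hiso2))
    by_cases hcosplit : ∃ K : Set G.V, K ≠ ∅ ∧ K ≠ Set.univ ∧ ∀ x ∈ K, ∀ y ∉ K, G.adj x y
    · -- ⊗-case: the complement of G is disconnected
      obtain ⟨K, hKne, hKnu, hK⟩ := hcosplit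
      have hGAB : G.iso ((induce G K).tensor (induce G Kᶜ)) := split_tensor K hK
      have hKcnu : Kᶜ ≠ Set.univ := by
        intro he
        obtain ⟨x, hx⟩ := Set.nonempty_iff_ne_empty.mpr hKne
        exact (he ▸ Set.mem_univ x : x ∈ Kᶜ) hx
      have hApr : Provable GSRule ((induce G K).dual.par (induce G K)) :=
        ih _ (by have := induce_card_lt (G := G) hKnu; omega)
      have hBpr : Provable GSRule ((induce G Kᶜ).dual.par (induce G Kᶜ)) :=
        ih _ (by have := induce_card_lt (G := G) hKcnu; omega)
      obtain ⟨xa, hxa⟩ := Set.nonempty_iff_ne_empty.mpr hKne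
      obtain ⟨xb, hxb⟩ := Set.nonempty_compl.mpr hKnu
      set A := induce G K
      set B := induce G Kᶜ
      have hBdne : Nonempty B.dual.V := ⟨⟨xb, hxb⟩⟩
      have h1 : Provable GSRule ((A.dual.par A).plug
          {z | Sum.elim (fun _ => False) (· ∈ (Set.univ : Set A.V)) z} (B.dual.par B)) :=
        provable_plug _ hApr hBpr
      have hiso1 : ((A.dual.par A).plug
          {z | Sum.elim (fun _ => False) (· ∈ (Set.univ : Set A.V)) z}
            (B.dual.par B)).iso
          (A.dual.plug ∅ ((A.tensor B).plug
            {z | Sum.elim (fun _ => True) (fun _ => False) z} B.dual)) := by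
        refine iso_trans (plug_par_right A.dual A (B.dual.par B) Set.univ) ?_
        refine iso_trans (par_congr (iso_rfl A.dual) (plug_univ A (B.dual.par B))) ?_
        refine iso_trans (par_congr (iso_rfl A.dual)
          (tensor_congr (iso_rfl A) (par_comm B.dual B))) ?_
        refine iso_trans (par_congr (iso_rfl A.dual)
          (iso_symm (plug_tensor_left A B B.dual))) ?_
        exact iso_symm (plug_emptyset A.dual _)
      have hSne : ({z | Sum.elim (fun _ => True) (fun _ => False) z} :
          Set (A.tensor B).V) ≠ ∅ := by
        intro he
        have hmem : (Sum.inl ⟨xa, hxa⟩ : (A.tensor B).V) ∈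
            ({z | Sum.elim (fun _ => True) (fun _ => False) z} :
              Set (A.tensor B).V) := trivial
        rw [he] at hmem
        exact hmem
      have hstep : Deriv GSRule
          (A.dual.plug ∅ ((A.tensor B).plug
            {z | Sum.elim (fun _ => True) (fun _ => False) z} B.dual))
          (A.dual.plug ∅ ((A.tensor B).par B.dual)) :=
        deriv_rule_plug A.dual ∅ (GSRule.ss B.dual (A.tensor B) _ hBdne hSne)
      have hiso2 : (A.dual.plug ∅ ((A.tensor B).par B.dual)).iso (G.dual.par G) := by
        refine iso_trans (plug_emptyset A.dual _) ?_
        refine iso_trans (par_congr (iso_rfl A.dual) (par_comm (A.tensor B) B.dual)) ?_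
        refine iso_trans (iso_symm (par_assoc A.dual B.dual (A.tensor B))) ?_
        exact iso_symm (iso_trans (par_congr (dual_congr hGAB) hGAB)
          (par_congr (dual_tensor A B) (iso_rfl (A.tensor B))))
      exact deriv_trans (deriv_trans h1 (deriv_iso hiso1))
        (deriv_trans hstep (deriv_iso hiso2))
    · -- prime case: G is connected and co-connected
      have hs : NoSplit G := by
        intro K hKe hKu
        by_contra h
        push_neg at h
        exact hsplit ⟨K, hKe, hKu, h⟩
      have hcs : NoCosplit G := by
        intro K hKe hKu
        by_contra h
        push_neg at h
        exact hcosplit ⟨K, hKe, hKu, h⟩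
      choose Mm hmod hproper hmem hmax using fun v => exists_maxmod hs hcs h2 v
      have hF : @MaxModFam G Mm := ⟨hmem, hmod, hproper, hmax, hs, hcs⟩
      have hprime := hF.quot_prime h2
      have hc4 : 4 ≤ Fintype.card (quotG G Mm).V := by
        have hge2 := hprime.1
        have hne2 := hF.quot_card_ne_two h2
        have hne3 : Fintype.card (quotG G Mm).V ≠ 3 :=
          fun h3 => not_prime_card_three h3 hprime
        omega
      set P := quotG G Mm with hP
      set n' := Fintype.card P.V with hn'
      set e : P.V ≃ Fin n' := Fintype.equivFin P.V with he
      set Mfun : Fin n' → LGraph := fun i => (parts G Mm (e.symm i)).dual with hMfun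
      set Nfun : Fin n' → LGraph := fun i => parts G Mm (e.symm i) with hNfun
      have hMne : ∀ i, Nonempty (Mfun i).V := fun i => hF.parts_nonempty (e.symm i)
      have hprem : Provable GSRule (bigTensor n' fun i => (Mfun i).par (Nfun i)) := by
        refine bigTensor_provable _ _ ?_
        intro i
        have hlt := hF.parts_card_lt (e.symm i)
        exact ih (parts G Mm (e.symm i)) (by omega)
      have hrule : GSRule (bigTensor n' fun i => (Mfun i).par (Nfun i))
          ((P.dual.comp fun v => Mfun (e v)).par (P.comp fun v => Nfun (e v))) :=
        GSRule.p n' P e Mfun Nfun hprime hc4 hMne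
      have hconc : Provable GSRule
          ((P.dual.comp fun v => Mfun (e v)).par (P.comp fun v => Nfun (e v))) :=
        deriv_trans hprem (deriv_rule hrule)
      simp only [hMfun, hNfun, Equiv.symm_apply_apply] at hconc
      have hgi : G.iso (P.comp (parts G Mm)) := hF.iso_comp
      refine provable_iso hconc (iso_symm (par_congr ?_ ?_))
      · exact iso_trans (dual_congr hgi)
          (by
            have hfun : (fun v : P.dual.V => (parts G Mm (e.symm (e v))).dual) =
                fun v => (parts G Mm v).dual :=
              funext fun v => congrArg (fun q => (parts G Mm q).dual) (e.symm_apply_apply v)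
            exact hfun ▸ dual_comp P (parts G Mm))
      · exact hgi

end Main

/-- For every graph `G`, the graph `Ḡ ⅋ G` is provable in GS. -/
theorem identity_provable (G : LGraph) : Provable GSRule (G.dual.par G) := by
  exact key_induction (Fintype.card G.V) G le_rfl

end GSP
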